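/- Two players with v₂ ≥ v₁ > 0, budgets B₁ ≥ B₂ > 0, B'₁ = B₂·e^{B₁/B₂ - 1}. The closed-form allocation of the clinching auction is: x(s) = (0, s) for s·v₁ ≤ B₂; x(s) = (s - B₂/v₁, B₂/v₁) for B₂ ≤ s·v₁ ≤ B'₁; and x(s) = (s - (sB₂/(2B'₁))·(1 + (B'₁/(s v₁))²), (sB₂/(2B'₁))·(1 + (B'₁/(s v₁))²)) for s·v₁ ≥ B'₁. Then both coordinates x₁(s) and x₂(s) are monotone non-decreasing in s on (0, ∞). -/

import Mathlib

set_option maxHeartbeats 1000000 in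
theorem allocation_monotone_two_players (v₁ v₂ B₁ B₂ : ℝ)
    (hv : v₂ ≥ v₁) (hv₁ : 0 < v₁) (hB : B₁ ≥ B₂) (hB₂ : 0 < B₂)
    (B₁' : ℝ) (hB₁' : B₁' = B₂ * Real.exp (B₁ / B₂ - 1))
    (x₁ x₂ : ℝ → ℝ)
    (hx₁ : ∀ s, x₁ s =
      if s * v₁ ≤ B₂ then 0
      else if s * v₁ ≤ B₁' then s - B₂ / v₁
      else s - (s * B₂ / (2 * B₁')) * (1 + (B₁' / (s * v₁)) ^ 2))
    (hx₂ : ∀ s, x₂ s =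
      if s * v₁ ≤ B₂ then s
      else if s * v₁ ≤ B₁' then B₂ / v₁
      else (s * B₂ / (2 * B₁')) * (1 + (B₁' / (s * v₁)) ^ 2)) :
    MonotoneOn x₁ (Set.Ioi 0) ∧ MonotoneOn x₂ (Set.Ioi 0) := by
  have hexp : (1:ℝ) ≤ Real.exp (B₁ / B₂ - 1) := by
    rw [Real.one_le_exp_iff]
    have : (1:ℝ) ≤ B₁ / B₂ := (one_le_div hB₂).mpr hB
    linarith
  have hPB : B₂ ≤ B₁' := by
    rw [hB₁']; nlinarith
  have hP : 0 < B₁' := lt_of_lt_of_le hB₂ hPB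
  -- closed form of the third regime as a single fraction
  have hg : ∀ u : ℝ, 0 < u →
      u * B₂ / (2 * B₁') * (1 + (B₁' / (u * v₁)) ^ 2)
        = B₂ * ((u * v₁) ^ 2 + B₁' ^ 2) / (2 * B₁' * u * v₁ ^ 2) := by
    intro u hu
    field_simp
  have hcg : ∀ u : ℝ, 0 < u → B₁' < u * v₁ →
      B₂ / v₁ ≤ B₂ * ((u * v₁) ^ 2 + B₁' ^ 2) / (2 * B₁' * u * v₁ ^ 2) := by
    intro u hu hu2
    rw [div_le_div_iff₀ hv₁ (by positivity)]
    nlinarith [mul_nonneg (mul_pos hB₂ hv₁).le (sq_nonneg (u * v₁ - B₁'))]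
  have hgmono : ∀ s t : ℝ, 0 < s → s ≤ t → B₁' < s * v₁ →
      B₂ * ((s * v₁) ^ 2 + B₁' ^ 2) / (2 * B₁' * s * v₁ ^ 2)
        ≤ B₂ * ((t * v₁) ^ 2 + B₁' ^ 2) / (2 * B₁' * t * v₁ ^ 2) := by
    intro s t hs hst hs2
    have ht : 0 < t := lt_of_lt_of_le hs hst
    rw [← sub_nonneg]
    have hEq : B₂ * ((t * v₁) ^ 2 + B₁' ^ 2) / (2 * B₁' * t * v₁ ^ 2)
        - B₂ * ((s * v₁) ^ 2 + B₁' ^ 2) / (2 * B₁' * s * v₁ ^ 2)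
        = B₂ * (t - s) * (s * t * v₁ ^ 2 - B₁' ^ 2) / (2 * B₁' * s * t * v₁ ^ 2) := by
      field_simp
      ring
    rw [hEq]
    apply div_nonneg _ (by positivity)
    have hstv : s * v₁ ≤ t * v₁ := by nlinarith
    have h1 : B₁' ^ 2 ≤ s * t * v₁ ^ 2 := by
      nlinarith [mul_le_mul hs2.le (le_trans hs2.le hstv) hP.le (by positivity : (0:ℝ) ≤ s * v₁)]
    have h2 : 0 ≤ t - s := by linarith
    nlinarith [mul_nonneg (mul_nonneg hB₂.le h2) (sub_nonneg.mpr h1)]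
  constructor
  · intro s hs t ht hst
    simp only [Set.mem_Ioi] at hs ht
    have hstv : s * v₁ ≤ t * v₁ := by nlinarith
    rw [hx₁ s, hx₁ t]
    rcases le_or_gt (s * v₁) B₂ with hs1 | hs1
    · rcases le_or_gt (t * v₁) B₂ with ht1 | ht1
      · rw [if_pos hs1, if_pos ht1]
      · rw [if_pos hs1, if_neg (not_le.mpr ht1)]
        rcases le_or_gt (t * v₁) B₁' with ht2 | ht2
        · rw [if_pos ht2, sub_nonneg, div_le_iff₀ hv₁]
          linarith
        · rw [if_neg (not_le.mpr ht2), hg t ht, sub_nonneg,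
              div_le_iff₀ (by positivity)]
          nlinarith [mul_nonneg (sub_nonneg.mpr hPB) (sq_nonneg (t * v₁)),
            mul_nonneg hP.le (sub_nonneg.mpr (by nlinarith : B₁' ^ 2 ≤ (t * v₁) ^ 2)),
            mul_nonneg (sub_nonneg.mpr hPB) (sq_nonneg B₁')]
    · have ht1 : ¬ t * v₁ ≤ B₂ := not_le.mpr (lt_of_lt_of_le hs1 hstv)
      rcases le_or_gt (s * v₁) B₁' with hs2 | hs2
      · rcases le_or_gt (t * v₁) B₁' with ht2 | ht2
        · rw [if_neg (not_le.mpr hs1), if_pos hs2, if_neg ht1, if_pos ht2]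
          linarith
        · rw [if_neg (not_le.mpr hs1), if_pos hs2, if_neg ht1,
              if_neg (not_le.mpr ht2), hg t ht, ← sub_nonneg]
          have hEq : t - B₂ * ((t * v₁) ^ 2 + B₁' ^ 2) / (2 * B₁' * t * v₁ ^ 2)
              - (s - B₂ / v₁)
              = ((t - s) * (2 * B₁' * t * v₁ ^ 2) + B₂ * (2 * B₁' * t * v₁)
                  - B₂ * ((t * v₁) ^ 2 + B₁' ^ 2)) / (2 * B₁' * t * v₁ ^ 2) := by
            field_simp
            ring
          rw [hEq]
          apply div_nonneg _ (by positivity)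
          nlinarith [mul_nonneg (sub_nonneg.mpr ht2.le)
              (by nlinarith : (0:ℝ) ≤ 2 * B₁' * (t * v₁) - B₂ * (t * v₁) + B₂ * B₁'),
            mul_nonneg (by positivity : (0:ℝ) ≤ 2 * B₁' * (t * v₁))
              (sub_nonneg.mpr hs2)]
      · have ht2 : B₁' < t * v₁ := lt_of_lt_of_le hs2 hstv
        rw [if_neg (not_le.mpr hs1), if_neg (not_le.mpr hs2), if_neg ht1,
            if_neg (not_le.mpr ht2), hg s hs, hg t (lt_of_lt_of_le hs hst),
            ← sub_nonneg]
        have hEq : t - B₂ * ((t * v₁) ^ 2 + B₁' ^ 2) / (2 * B₁' * t * v₁ ^ 2)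
            - (s - B₂ * ((s * v₁) ^ 2 + B₁' ^ 2) / (2 * B₁' * s * v₁ ^ 2))
            = (t - s) * (2 * B₁' * s * t * v₁ ^ 2
                - B₂ * (s * t * v₁ ^ 2 - B₁' ^ 2)) / (2 * B₁' * s * t * v₁ ^ 2) := by
          field_simp
          ring
        rw [hEq]
        apply div_nonneg _ (by positivity)
        have h1 : B₁' ^ 2 ≤ s * t * v₁ ^ 2 := by
          nlinarith [mul_le_mul hs2.le (le_trans hs2.le hstv) hP.le (by positivity : (0:ℝ) ≤ s * v₁)]
        have h2 : 0 ≤ t - s := by linarith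
        have h3 : 0 ≤ 2 * B₁' * s * t * v₁ ^ 2 - B₂ * (s * t * v₁ ^ 2 - B₁' ^ 2) := by
          nlinarith [mul_nonneg (by linarith : (0:ℝ) ≤ 2 * B₁' - B₂)
              (by positivity : (0:ℝ) ≤ s * t * v₁ ^ 2),
            mul_nonneg hB₂.le (sq_nonneg B₁')]
        exact mul_nonneg h2 h3
  · intro s hs t ht hst
    simp only [Set.mem_Ioi] at hs ht
    have hstv : s * v₁ ≤ t * v₁ := by nlinarith
    rw [hx₂ s, hx₂ t]
    rcases le_or_gt (s * v₁) B₂ with hs1 | hs1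
    · rcases le_or_gt (t * v₁) B₂ with ht1 | ht1
      · rw [if_pos hs1, if_pos ht1]; exact hst
      · have hsc : s ≤ B₂ / v₁ := by rw [le_div_iff₀ hv₁]; exact hs1
        rw [if_pos hs1, if_neg (not_le.mpr ht1)]
        rcases le_or_gt (t * v₁) B₁' with ht2 | ht2
        · rw [if_pos ht2]; exact hsc
        · rw [if_neg (not_le.mpr ht2), hg t ht]
          exact le_trans hsc (hcg t ht ht2)
    · have ht1 : ¬ t * v₁ ≤ B₂ := not_le.mpr (lt_of_lt_of_le hs1 hstv)
      rcases le_or_gt (s * v₁) B₁' with hs2 | hs2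
      · rcases le_or_gt (t * v₁) B₁' with ht2 | ht2
        · rw [if_neg (not_le.mpr hs1), if_pos hs2, if_neg ht1, if_pos ht2]
        · rw [if_neg (not_le.mpr hs1), if_pos hs2, if_neg ht1,
              if_neg (not_le.mpr ht2), hg t ht]
          exact hcg t ht ht2
      · have ht2 : B₁' < t * v₁ := lt_of_lt_of_le hs2 hstv
        rw [if_neg (not_le.mpr hs1), if_neg (not_le.mpr hs2), if_neg ht1,
            if_neg (not_le.mpr ht2), hg s hs, hg t ht]
        exact hgmono s t hs hst hs2
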